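/- Suppose additionally that r₁ = m₂ and r₂ = m₁ (so in particular r₁ + r₂ = 1). Then p_{2n+1}(1) = q_{2n+1}(1) for every n ∈ ℕ₀, and consequently sin^N_μ(z) = sin^D_μ(z) for all z ∈ ℝ; in particular the positive zeros of sin^N_μ and of sin^D_μ coincide (i.e. the positive Neumann eigenvalues of −(d/dμ)(d/dx) coincide with its Dirichlet eigenvalues). -/

import Mathlib

open MeasureTheory

open MeasureTheory Set
open scoped ENNReal

noncomputable def Fc (μ : Measure ℝ) (x : ℝ) : ℝ := (μ (Set.Iic x)).toReal

variable {μ : Measure ℝ}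

lemma Fc_mono [IsProbabilityMeasure μ] : Monotone (Fc μ) := fun a b hab =>
  ENNReal.toReal_mono (measure_ne_top μ _) (measure_mono (Iic_subset_Iic.2 hab))

lemma Fc_meas [IsProbabilityMeasure μ] : Measurable (Fc μ) := Fc_mono.measurable

lemma Fc_nonneg (x : ℝ) : 0 ≤ Fc μ x := ENNReal.toReal_nonneg

lemma Fc_le_one [IsProbabilityMeasure μ] (x : ℝ) : Fc μ x ≤ 1 := by
  have h := prob_le_one (μ := μ) (s := Set.Iic x)
  have := ENNReal.toReal_mono (by simp) h
  show (μ (Set.Iic x)).toReal ≤ 1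
  simpa using this

lemma measure_Iio_zero (hsupp : μ (Set.Icc (0:ℝ) 1)ᶜ = 0) : μ (Set.Iio 0) = 0 :=
  measure_mono_null (fun x hx => by
    simp only [Set.mem_compl_iff, Set.mem_Icc, not_and_or, not_le]
    exact Or.inl hx) hsupp

lemma measure_Ioi_zero (hsupp : μ (Set.Icc (0:ℝ) 1)ᶜ = 0) : μ (Set.Ioi 1) = 0 :=
  measure_mono_null (fun x hx => by
    simp only [Set.mem_compl_iff, Set.mem_Icc, not_and_or, not_le]
    exact Or.inr hx) hsupp

lemma Fc_nonpos [NullSingletonClass μ] (hsupp : μ (Set.Icc (0:ℝ) 1)ᶜ = 0) {y : ℝ} (hy : y ≤ 0) :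
    Fc μ y = 0 := by
  have hsub : Set.Iic y ⊆ Set.Iio 0 ∪ {(0:ℝ)} := by
    intro x hx
    rcases lt_or_eq_of_le (le_trans hx hy) with h | h
    · exact Or.inl h
    · exact Or.inr (by simp [h])
  have h0 : μ (Set.Iio 0 ∪ {(0:ℝ)}) = 0 :=
    measure_union_null (measure_Iio_zero hsupp) (measure_singleton 0)
  unfold Fc
  rw [measure_mono_null hsub h0]
  simp

lemma measure_Iic_one [IsProbabilityMeasure μ] (hsupp : μ (Set.Icc (0:ℝ) 1)ᶜ = 0) :
    μ (Set.Iic 1) = 1 := by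
  refine le_antisymm prob_le_one ?_
  have h : (1:ℝ≥0∞) = μ (Set.Iic 1 ∪ Set.Ioi 1) := by
    rw [Set.Iic_union_Ioi, measure_univ]
  calc (1:ℝ≥0∞) = μ (Set.Iic 1 ∪ Set.Ioi 1) := h
    _ ≤ μ (Set.Iic 1) + μ (Set.Ioi 1) := measure_union_le _ _
    _ = μ (Set.Iic 1) := by rw [measure_Ioi_zero hsupp, add_zero]

lemma Fc_of_one_le [IsProbabilityMeasure μ] (hsupp : μ (Set.Icc (0:ℝ) 1)ᶜ = 0) {y : ℝ}
    (hy : 1 ≤ y) : Fc μ y = 1 := by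
  have h : μ (Set.Iic y) = 1 := le_antisymm prob_le_one
    (by rw [← measure_Iic_one hsupp]; exact measure_mono (Set.Iic_subset_Iic.2 hy))
  unfold Fc; rw [h]; simp

lemma Fc_one [IsProbabilityMeasure μ] (hsupp : μ (Set.Icc (0:ℝ) 1)ᶜ = 0) : Fc μ 1 = 1 :=
  Fc_of_one_le hsupp le_rfl

lemma Fc_selfsim [IsProbabilityMeasure μ] {r₁ r₂ m₁ m₂ : ℝ}
    (hr₁ : 0 < r₁) (hr₂ : 0 < r₂) (hm₁ : 0 < m₁) (hm₂ : 0 < m₂)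
    (hss : μ = ENNReal.ofReal m₁ • Measure.map (fun x => r₁ * x) μ
           + ENNReal.ofReal m₂ • Measure.map (fun x => r₂ * x + 1 - r₂) μ)
    (y : ℝ) :
    Fc μ y = m₁ * Fc μ (y / r₁) + m₂ * Fc μ ((y - (1 - r₂)) / r₂) := by
  have hmeas1 : Measurable (fun x : ℝ => r₁ * x) := measurable_id.const_mul r₁
  have hmeas2 : Measurable (fun x : ℝ => r₂ * x + 1 - r₂) :=
    ((measurable_id.const_mul r₂).add_const 1).sub_const r₂
  have h1 : (fun x : ℝ => r₁ * x) ⁻¹' (Set.Iic y) = Set.Iic (y / r₁) := by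
    ext x
    simp only [Set.mem_preimage, Set.mem_Iic]
    rw [le_div_iff₀ hr₁, mul_comm]
  have h2 : (fun x : ℝ => r₂ * x + 1 - r₂) ⁻¹' (Set.Iic y) = Set.Iic ((y - (1 - r₂)) / r₂) := by
    ext x
    simp only [Set.mem_preimage, Set.mem_Iic]
    rw [le_div_iff₀ hr₂, mul_comm]
    constructor <;> intro h <;> linarith
  have hμ : μ (Set.Iic y) = ENNReal.ofReal m₁ * μ (Set.Iic (y / r₁))
      + ENNReal.ofReal m₂ * μ (Set.Iic ((y - (1 - r₂)) / r₂)) := by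
    conv_lhs => rw [hss]
    rw [Measure.add_apply, Measure.smul_apply, Measure.smul_apply,
      Measure.map_apply hmeas1 measurableSet_Iic, Measure.map_apply hmeas2 measurableSet_Iic,
      h1, h2, smul_eq_mul, smul_eq_mul]
  unfold Fc
  rw [hμ, ENNReal.toReal_add, ENNReal.toReal_mul, ENNReal.toReal_mul,
    ENNReal.toReal_ofReal hm₁.le, ENNReal.toReal_ofReal hm₂.le]
  · exact ENNReal.mul_ne_top ENNReal.ofReal_ne_top (measure_ne_top μ _)
  · exact ENNReal.mul_ne_top ENNReal.ofReal_ne_top (measure_ne_top μ _)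

lemma Fc_eq1 [IsProbabilityMeasure μ] [NullSingletonClass μ] {r₁ r₂ m₁ m₂ : ℝ}
    (hsupp : μ (Set.Icc (0:ℝ) 1)ᶜ = 0)
    (hr₁ : 0 < r₁) (hr₂ : 0 < r₂) (hm₁ : 0 < m₁) (hm₂ : 0 < m₂) (hrs : r₁ + r₂ = 1)
    (hss : μ = ENNReal.ofReal m₁ • Measure.map (fun x => r₁ * x) μ
           + ENNReal.ofReal m₂ • Measure.map (fun x => r₂ * x + 1 - r₂) μ)
    {x : ℝ} (hx : x ∈ Set.Icc (0:ℝ) 1) :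
    Fc μ (r₁ * x) = m₁ * Fc μ x := by
  have h := Fc_selfsim hr₁ hr₂ hm₁ hm₂ hss (r₁ * x)
  rw [mul_div_cancel_left₀ x hr₁.ne'] at h
  have harg : (r₁ * x - (1 - r₂)) / r₂ ≤ 0 := by
    apply div_nonpos_of_nonpos_of_nonneg _ hr₂.le
    nlinarith [hx.2]
  rw [Fc_nonpos hsupp harg, mul_zero, add_zero] at h
  exact h

lemma Fc_eq2 [IsProbabilityMeasure μ] [NullSingletonClass μ] {r₁ r₂ m₁ m₂ : ℝ}
    (hsupp : μ (Set.Icc (0:ℝ) 1)ᶜ = 0)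
    (hr₁ : 0 < r₁) (hr₂ : 0 < r₂) (hm₁ : 0 < m₁) (hm₂ : 0 < m₂) (hrs : r₁ + r₂ = 1)
    (hss : μ = ENNReal.ofReal m₁ • Measure.map (fun x => r₁ * x) μ
           + ENNReal.ofReal m₂ • Measure.map (fun x => r₂ * x + 1 - r₂) μ)
    {x : ℝ} (hx : x ∈ Set.Icc (0:ℝ) 1) :
    Fc μ (r₂ * x + 1 - r₂) = m₁ + m₂ * Fc μ x := by
  have h := Fc_selfsim hr₁ hr₂ hm₁ hm₂ hss (r₂ * x + 1 - r₂)
  have e1 : (r₂ * x + 1 - r₂ - (1 - r₂)) = r₂ * x := by ring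
  rw [e1, mul_div_cancel_left₀ x hr₂.ne'] at h
  have harg : 1 ≤ (r₂ * x + 1 - r₂) / r₁ := by
    rw [le_div_iff₀ hr₁]
    nlinarith [hx.1]
  rw [Fc_of_one_le hsupp harg, mul_one] at h
  exact h

lemma Fc_K [IsProbabilityMeasure μ] [NullSingletonClass μ] {r₁ r₂ m₁ m₂ : ℝ}
    (hsupp : μ (Set.Icc (0:ℝ) 1)ᶜ = 0)
    (hr₁ : 0 < r₁) (hr₂ : 0 < r₂) (hm₁ : 0 < m₁) (hm₂ : 0 < m₂) (hmsum : m₁ + m₂ = 1)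
    (hss : μ = ENNReal.ofReal m₁ • Measure.map (fun x => r₁ * x) μ
           + ENNReal.ofReal m₂ • Measure.map (fun x => r₂ * x + 1 - r₂) μ)
    (h₁₂ : r₁ = m₂) (h₂₁ : r₂ = m₁) :
    ∀ t ∈ Set.Icc (0:ℝ) 1, Fc μ (1 - Fc μ t) = 1 - t := by
  have hrs : r₁ + r₂ = 1 := by rw [h₁₂, h₂₁]; linarith
  set d : ℝ → ℝ := fun t => Fc μ (1 - Fc μ t) - (1 - t) with hd
  have hFmem : ∀ t : ℝ, (1 - Fc μ t) ∈ Set.Icc (0:ℝ) 1 :=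
    fun t => ⟨by linarith [Fc_le_one (μ := μ) t], by linarith [Fc_nonneg (μ := μ) t]⟩
  have hm : m₁ = 1 - m₂ := by linarith
  have id1 : ∀ s ∈ Set.Icc (0:ℝ) 1, d (r₁ * s) = m₂ * d s := by
    intro s hs
    have e1 := Fc_eq1 hsupp hr₁ hr₂ hm₁ hm₂ hrs hss hs
    have earg : r₂ * (1 - Fc μ s) + 1 - r₂ = 1 - m₁ * Fc μ s := by rw [h₂₁]; ring
    have e2 := Fc_eq2 hsupp hr₁ hr₂ hm₁ hm₂ hrs hss (hFmem s)
    rw [earg] at e2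
    simp only [hd]
    rw [e1, e2, h₁₂, hm]
    ring
  have id2 : ∀ s ∈ Set.Icc (0:ℝ) 1, d (r₂ * s + 1 - r₂) = m₁ * d s := by
    intro s hs
    have e2 := Fc_eq2 hsupp hr₁ hr₂ hm₁ hm₂ hrs hss hs
    have earg : 1 - (m₁ + m₂ * Fc μ s) = r₁ * (1 - Fc μ s) := by rw [h₁₂, hm]; ring
    have e1 := Fc_eq1 hsupp hr₁ hr₂ hm₁ hm₂ hrs hss (hFmem s)
    simp only [hd]
    rw [e2, earg, e1, h₂₁]
    ring
  set Dset := (fun t => |d t|) '' Set.Icc (0:ℝ) 1 with hDset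
  have hbdd : BddAbove Dset := by
    refine ⟨2, ?_⟩
    rintro _ ⟨t, ht, rfl⟩
    have h1 : |Fc μ (1 - Fc μ t)| ≤ 1 :=
      abs_le.mpr ⟨by linarith [Fc_nonneg (μ := μ) (1 - Fc μ t)], Fc_le_one _⟩
    have h2 : |1 - t| ≤ 1 := abs_le.mpr ⟨by linarith [ht.2], by linarith [ht.1]⟩
    calc |d t| ≤ |Fc μ (1 - Fc μ t)| + |1 - t| := abs_sub _ _
      _ ≤ 2 := by linarith
  have hne : Dset.Nonempty := ⟨|d 0|, 0, ⟨le_refl 0, zero_le_one⟩, rfl⟩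
  set D := sSup Dset with hDdef
  have hle : ∀ t ∈ Set.Icc (0:ℝ) 1, |d t| ≤ D := fun t ht => le_csSup hbdd ⟨t, ht, rfl⟩
  have hDnonneg : 0 ≤ D := le_trans (abs_nonneg _) (hle 0 ⟨le_rfl, zero_le_one⟩)
  have hm₁lt : m₁ < 1 := by linarith
  have hm₂lt : m₂ < 1 := by linarith
  have hstep : ∀ t ∈ Set.Icc (0:ℝ) 1, |d t| ≤ max m₁ m₂ * D := by
    intro t ht
    rcases le_or_gt t r₁ with h | h
    · have hs : t / r₁ ∈ Set.Icc (0:ℝ) 1 := ⟨div_nonneg ht.1 hr₁.le, (div_le_one hr₁).2 h⟩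
      have hts : r₁ * (t / r₁) = t := by field_simp
      calc |d t| = |d (r₁ * (t / r₁))| := by rw [hts]
        _ = m₂ * |d (t / r₁)| := by rw [id1 _ hs, abs_mul, abs_of_nonneg hm₂.le]
        _ ≤ m₂ * D := mul_le_mul_of_nonneg_left (hle _ hs) hm₂.le
        _ ≤ max m₁ m₂ * D := mul_le_mul_of_nonneg_right (le_max_right _ _) hDnonneg
    · have hs : (t - r₁) / r₂ ∈ Set.Icc (0:ℝ) 1 :=
        ⟨div_nonneg (by linarith) hr₂.le, (div_le_one hr₂).2 (by linarith [ht.2])⟩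
      have h1 : r₂ * ((t - r₁) / r₂) = t - r₁ := by field_simp
      have hts : r₂ * ((t - r₁) / r₂) + 1 - r₂ = t := by rw [h1]; linarith
      calc |d t| = |d (r₂ * ((t - r₁) / r₂) + 1 - r₂)| := by rw [hts]
        _ = m₁ * |d ((t - r₁) / r₂)| := by rw [id2 _ hs, abs_mul, abs_of_nonneg hm₁.le]
        _ ≤ m₁ * D := mul_le_mul_of_nonneg_left (hle _ hs) hm₁.le
        _ ≤ max m₁ m₂ * D := mul_le_mul_of_nonneg_right (le_max_left _ _) hDnonneg
  have hD0 : D ≤ max m₁ m₂ * D := csSup_le hne (by rintro _ ⟨t, ht, rfl⟩; exact hstep t ht)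
  have hmaxlt : max m₁ m₂ < 1 := max_lt hm₁lt hm₂lt
  have hDzero : D ≤ 0 := by nlinarith
  intro t ht
  have h1 : |d t| ≤ 0 := le_trans (hle t ht) hDzero
  have h2 : d t = 0 := abs_eq_zero.mp (le_antisymm h1 (abs_nonneg _))
  have : Fc μ (1 - Fc μ t) - (1 - t) = 0 := h2
  linarith

noncomputable def Gc (μ : Measure ℝ) (y : ℝ) : ℝ := 1 - Fc μ (1 - y)

lemma Gc_mono [IsProbabilityMeasure μ] : Monotone (Gc μ) := fun a b hab =>
  sub_le_sub_left (Fc_mono (sub_le_sub_left hab 1)) 1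

lemma Gc_meas [IsProbabilityMeasure μ] : Measurable (Gc μ) :=
  measurable_const.sub (Fc_meas.comp (measurable_const.sub measurable_id))

lemma Gc_mem [IsProbabilityMeasure μ] (y : ℝ) : Gc μ y ∈ Set.Icc (0:ℝ) 1 :=
  ⟨by unfold Gc; linarith [Fc_le_one (μ := μ) (1 - y)],
   by unfold Gc; linarith [Fc_nonneg (μ := μ) (1 - y)]⟩

section MainAux

variable [IsProbabilityMeasure μ]

/-- consequences of K, packaged with K as hypothesis -/
lemma Gc_Fc (hK : ∀ t ∈ Set.Icc (0:ℝ) 1, Fc μ (1 - Fc μ t) = 1 - t)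
    {t : ℝ} (ht : t ∈ Set.Icc (0:ℝ) 1) : Gc μ (Fc μ t) = t := by
  unfold Gc
  rw [hK t ht]
  ring

lemma Fc_Gc (hK : ∀ t ∈ Set.Icc (0:ℝ) 1, Fc μ (1 - Fc μ t) = 1 - t)
    {y : ℝ} (hy : y ∈ Set.Icc (0:ℝ) 1) : Fc μ (Gc μ y) = y := by
  have h1y : (1 - y) ∈ Set.Icc (0:ℝ) 1 := ⟨by linarith [hy.2], by linarith [hy.1]⟩
  unfold Gc
  rw [hK (1 - y) h1y]
  ring

lemma map_Gc [NullSingletonClass μ] (hsupp : μ (Set.Icc (0:ℝ) 1)ᶜ = 0)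
    (hK : ∀ t ∈ Set.Icc (0:ℝ) 1, Fc μ (1 - Fc μ t) = 1 - t) :
    Measure.map (Gc μ) (volume.restrict (Set.Icc (0:ℝ) 1)) = μ := by
  haveI : IsFiniteMeasure (volume.restrict (Set.Icc (0:ℝ) 1)) :=
    ⟨by rw [Measure.restrict_apply_univ, Real.volume_Icc]; exact ENNReal.ofReal_lt_top⟩
  refine Measure.ext_of_Iic _ μ (fun a => ?_)
  rw [Measure.map_apply Gc_meas measurableSet_Iic,
    Measure.restrict_apply (Gc_meas measurableSet_Iic)]
  rcases lt_or_ge a 0 with ha | ha0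
  · have hset : Gc μ ⁻¹' Set.Iic a ∩ Set.Icc 0 1 = (∅ : Set ℝ) := by
      apply Set.eq_empty_iff_forall_notMem.mpr
      rintro x ⟨hx1, hx2⟩
      have := (Gc_mem (μ := μ) x).1
      have : Gc μ x ≤ a := hx1
      linarith [(Gc_mem (μ := μ) x).1]
    have hμa : μ (Set.Iic a) = 0 :=
      measure_mono_null (fun x hx => lt_of_le_of_lt hx ha) (measure_Iio_zero hsupp)
    rw [hset, hμa, measure_empty]
  rcases le_or_gt a 1 with ha1 | ha1
  · have haI : a ∈ Set.Icc (0:ℝ) 1 := ⟨ha0, ha1⟩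
    have hset : Gc μ ⁻¹' Set.Iic a ∩ Set.Icc 0 1 = Set.Icc 0 (Fc μ a) := by
      ext u
      simp only [Set.mem_inter_iff, Set.mem_preimage, Set.mem_Iic, Set.mem_Icc]
      constructor
      · rintro ⟨h1, h2, h3⟩
        refine ⟨h2, ?_⟩
        have : Fc μ (Gc μ u) ≤ Fc μ a := Fc_mono h1
        rwa [Fc_Gc hK ⟨h2, h3⟩] at this
      · rintro ⟨h1, h2⟩
        have hu1 : u ≤ 1 := le_trans h2 (Fc_le_one a)
        refine ⟨?_, h1, hu1⟩
        have : Gc μ u ≤ Gc μ (Fc μ a) := Gc_mono h2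
        rwa [Gc_Fc hK haI] at this
    rw [hset, Real.volume_Icc, sub_zero]
    unfold Fc
    rw [ENNReal.ofReal_toReal (measure_ne_top μ _)]
  · have hset : Gc μ ⁻¹' Set.Iic a ∩ Set.Icc 0 1 = Set.Icc (0:ℝ) 1 := by
      apply Set.inter_eq_right.mpr
      intro x hx
      have := (Gc_mem (μ := μ) x).2
      simp only [Set.mem_preimage, Set.mem_Iic]
      linarith
    have hμa : μ (Set.Iic a) = 1 := le_antisymm prob_le_one
      (by rw [← measure_Iic_one hsupp]; exact measure_mono (Set.Iic_subset_Iic.2 ha1.le))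
    rw [hset, hμa, Real.volume_Icc]
    simp

end MainAux

section Cov
variable [IsProbabilityMeasure μ]

lemma cov (hmap : Measure.map (Gc μ) (volume.restrict (Set.Icc (0:ℝ) 1)) = μ)
    {h : ℝ → ℝ} (hh : Measurable h) {s : Set ℝ} (hs : MeasurableSet s) :
    ∫ t in s, h t ∂μ = ∫ u in Set.Icc (0:ℝ) 1 ∩ Gc μ ⁻¹' s, h (Gc μ u) := by
  conv_lhs => rw [← hmap]
  rw [setIntegral_map hs hh.aestronglyMeasurable Gc_meas.aemeasurable,
    Measure.restrict_restrict (Gc_meas hs), Set.inter_comm]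

lemma set_cov1 (hK : ∀ t ∈ Set.Icc (0:ℝ) 1, Fc μ (1 - Fc μ t) = 1 - t)
    {a : ℝ} (ha : a ∈ Set.Icc (0:ℝ) 1) :
    Set.Icc (0:ℝ) 1 ∩ Gc μ ⁻¹' (Set.Icc a 1) = Set.Icc (Fc μ a) 1 := by
  ext u
  simp only [Set.mem_inter_iff, Set.mem_preimage, Set.mem_Icc]
  constructor
  · rintro ⟨⟨h0, h1⟩, h2, h3⟩
    refine ⟨?_, h1⟩
    have : Fc μ a ≤ Fc μ (Gc μ u) := Fc_mono h2
    rwa [Fc_Gc hK ⟨h0, h1⟩] at this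
  · rintro ⟨h1, h2⟩
    have h0 : 0 ≤ u := le_trans (Fc_nonneg a) h1
    refine ⟨⟨h0, h2⟩, ?_, (Gc_mem (μ := μ) u).2⟩
    have : Gc μ (Fc μ a) ≤ Gc μ u := Gc_mono h1
    rwa [Gc_Fc hK ha] at this

lemma set_cov2 (hK : ∀ t ∈ Set.Icc (0:ℝ) 1, Fc μ (1 - Fc μ t) = 1 - t)
    {x : ℝ} (hx : x ∈ Set.Icc (0:ℝ) 1) :
    Set.Icc (0:ℝ) 1 ∩ Gc μ ⁻¹' (Set.Icc 0 x) = Set.Icc 0 (Fc μ x) := by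
  ext u
  simp only [Set.mem_inter_iff, Set.mem_preimage, Set.mem_Icc]
  constructor
  · rintro ⟨⟨h0, h1⟩, h2, h3⟩
    refine ⟨h0, ?_⟩
    have : Fc μ (Gc μ u) ≤ Fc μ x := Fc_mono h3
    rwa [Fc_Gc hK ⟨h0, h1⟩] at this
  · rintro ⟨h1, h2⟩
    have hu1 : u ≤ 1 := le_trans h2 (Fc_le_one x)
    refine ⟨⟨h1, hu1⟩, (Gc_mem (μ := μ) u).1, ?_⟩
    have : Gc μ u ≤ Gc μ (Fc μ x) := Gc_mono h2
    rwa [Gc_Fc hK hx] at this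

end Cov

noncomputable def Bf (μ : Measure ℝ) : ℕ → ℝ → ℝ
  | 0 => fun _ => 1
  | n + 1 =>
    if n % 2 = 0 then fun y => ∫ t in Set.Icc y 1, Bf μ n t ∂μ
    else fun y => ∫ t in y..1, Bf μ n t

lemma Bf_zero (μ : Measure ℝ) (y : ℝ) : Bf μ 0 y = 1 := rfl

lemma Bf_odd (μ : Measure ℝ) (j : ℕ) (y : ℝ) :
    Bf μ (2 * j + 1) y = ∫ t in Set.Icc y 1, Bf μ (2 * j) t ∂μ := by
  show Bf μ (2 * j + 1) y = _
  rw [Bf]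
  simp [Nat.mul_mod_right]

lemma Bf_even (μ : Measure ℝ) (j : ℕ) (y : ℝ) :
    Bf μ (2 * j + 2) y = ∫ t in y..1, Bf μ (2 * j + 1) t := by
  show Bf μ (2 * j + 1 + 1) y = _
  rw [Bf]
  have : (2 * j + 1) % 2 = 1 := by omega
  rw [this]
  simp

section BProps
variable [IsProbabilityMeasure μ] [NullSingletonClass μ]

lemma ae_mem_Icc (hsupp : μ (Set.Icc (0:ℝ) 1)ᶜ = 0) : ∀ᵐ t ∂μ, t ∈ Set.Icc (0:ℝ) 1 := by
  rw [MeasureTheory.ae_iff]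
  exact hsupp

lemma integrable_of_bound (hsupp : μ (Set.Icc (0:ℝ) 1)ᶜ = 0) {f : ℝ → ℝ}
    (hf : Measurable f) (hb : ∀ t ∈ Set.Icc (0:ℝ) 1, |f t| ≤ 1) : Integrable f μ :=
  Integrable.mono' (integrable_const 1) hf.aestronglyMeasurable
    ((ae_mem_Icc hsupp).mono fun t ht => by rw [Real.norm_eq_abs]; exact hb t ht)

def Bpack (μ : Measure ℝ) (n : ℕ) : Prop :=
  Antitone (Bf μ n) ∧ (∀ y, 0 ≤ Bf μ n y) ∧ (∀ y ∈ Set.Icc (0:ℝ) 1, Bf μ n y ≤ 1)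

lemma Bf_props (hsupp : μ (Set.Icc (0:ℝ) 1)ᶜ = 0) :
    ∀ j : ℕ, Bpack μ (2 * j) ∧ Bpack μ (2 * j + 1) ∧
      (∀ y, 1 ≤ y → Bf μ (2 * j + 1) y = 0) := by
  have stepO : ∀ j : ℕ, Bpack μ (2 * j) →
      Bpack μ (2 * j + 1) ∧ (∀ y, 1 ≤ y → Bf μ (2 * j + 1) y = 0) := by
    rintro j ⟨hA, hN, hL⟩
    have hInt : Integrable (Bf μ (2 * j)) μ :=
      integrable_of_bound hsupp hA.measurable
        (fun t ht => abs_le.mpr ⟨by linarith [hN t], hL t ht⟩)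
    have hanti : Antitone (Bf μ (2 * j + 1)) := by
      intro y y' hyy'
      rw [Bf_odd, Bf_odd]
      exact setIntegral_mono_set hInt.integrableOn
        (Filter.Eventually.of_forall fun t => hN t)
        ((Set.Icc_subset_Icc_left hyy').eventuallyLE)
    have hnn : ∀ y, 0 ≤ Bf μ (2 * j + 1) y := by
      intro y
      rw [Bf_odd]
      exact setIntegral_nonneg measurableSet_Icc (fun t _ => hN t)
    refine ⟨⟨hanti, hnn, ?_⟩, ?_⟩
    · intro y hy
      rw [Bf_odd]
      calc ∫ t in Set.Icc y 1, Bf μ (2 * j) t ∂μ ≤ ∫ _t in Set.Icc y 1, (1:ℝ) ∂μ := by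
            apply setIntegral_mono_on hInt.integrableOn (integrableOn_const (measure_ne_top μ _))
              measurableSet_Icc
            exact fun t ht => hL t ⟨le_trans hy.1 ht.1, ht.2⟩
        _ = (μ (Set.Icc y 1)).toReal := by rw [setIntegral_const, smul_eq_mul, mul_one]; rfl
        _ ≤ 1 := by
            have := prob_le_one (μ := μ) (s := Set.Icc y 1)
            have := ENNReal.toReal_mono (by simp) this
            simpa using this
    · intro y hy
      rw [Bf_odd]
      have hnull : μ (Set.Icc y 1) = 0 := by
        refine measure_mono_null (fun t ht => ?_) (measure_singleton (1:ℝ))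
        have : t = 1 := le_antisymm ht.2 (le_trans hy ht.1)
        simp [this]
      rw [Measure.restrict_eq_zero.mpr hnull]
      exact integral_zero_measure _
  have stepE : ∀ j : ℕ, Bpack μ (2 * j + 1) → (∀ y, 1 ≤ y → Bf μ (2 * j + 1) y = 0) →
      Bpack μ (2 * j + 2) := by
    rintro j ⟨hA, hN, hL⟩ hZ
    have hII : ∀ a b : ℝ, IntervalIntegrable (Bf μ (2 * j + 1)) volume a b :=
      fun a b => hA.intervalIntegrable
    have hanti : Antitone (Bf μ (2 * j + 2)) := by
      intro y y' hyy'
      rw [Bf_even, Bf_even]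
      have hsplit : (∫ t in y..y', Bf μ (2*j+1) t) + ∫ t in y'..1, Bf μ (2*j+1) t
          = ∫ t in y..1, Bf μ (2*j+1) t :=
        intervalIntegral.integral_add_adjacent_intervals (hII y y') (hII y' 1)
      have hpos : 0 ≤ ∫ t in y..y', Bf μ (2*j+1) t :=
        intervalIntegral.integral_nonneg hyy' (fun u _ => hN u)
      linarith
    have hnn : ∀ y, 0 ≤ Bf μ (2 * j + 2) y := by
      intro y
      rw [Bf_even]
      rcases le_or_gt y 1 with hy | hy
      · exact intervalIntegral.integral_nonneg hy (fun u _ => hN u)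
      · have hEq : Set.EqOn (Bf μ (2*j+1)) 0 (Set.uIcc y 1) := by
          intro t ht
          rw [Set.uIcc_of_ge hy.le] at ht
          exact hZ t ht.1
        rw [intervalIntegral.integral_congr hEq]
        simp
    refine ⟨hanti, hnn, ?_⟩
    intro y hy
    rw [Bf_even]
    calc (∫ t in y..1, Bf μ (2*j+1) t) ≤ ∫ _t in y..1, (1:ℝ) := by
          apply intervalIntegral.integral_mono_on hy.2 (hII y 1) intervalIntegrable_const
          exact fun t ht => hL t ⟨le_trans hy.1 ht.1, ht.2⟩
      _ = 1 - y := by simp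
      _ ≤ 1 := by linarith [hy.1]
  intro j
  induction j with
  | zero =>
    have h0 : Bpack μ 0 := ⟨fun a b _ => le_refl 1, fun y => zero_le_one, fun y _ => le_refl 1⟩
    have h0' : Bpack μ (2 * 0) := by simpa using h0
    obtain ⟨h1, h2⟩ := stepO 0 h0'
    exact ⟨h0', h1, h2⟩
  | succ j ih =>
    obtain ⟨hE, hO, hZ⟩ := ih
    have hE' : Bpack μ (2 * (j + 1)) := by
      have := stepE j hO hZ
      have heq : 2 * (j + 1) = 2 * j + 2 := by ring
      rwa [heq]
    obtain ⟨h1, h2⟩ := stepO (j + 1) hE'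
    exact ⟨hE', h1, h2⟩

end BProps

section Fubini
variable [IsProbabilityMeasure μ]

lemma indicator_bound {f g : ℝ → ℝ}
    (hfb : ∀ s ∈ Set.Icc (0:ℝ) 1, |f s| ≤ 1) (hgb : ∀ t ∈ Set.Icc (0:ℝ) 1, |g t| ≤ 1)
    {a b : ℝ} (ha : a ∈ Set.Icc (0:ℝ) 1) (hb : b ∈ Set.Icc (0:ℝ) 1) :
    ‖(Set.Iic a).indicator f b * g a‖ ≤ 1 := by
  rw [Real.norm_eq_abs, abs_mul]
  have h1 : |(Set.Iic a).indicator f b| ≤ 1 := by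
    by_cases hmem : b ∈ Set.Iic a
    · rw [Set.indicator_of_mem hmem]; exact hfb b hb
    · rw [Set.indicator_of_notMem hmem]; simp
  calc |(Set.Iic a).indicator f b| * |g a| ≤ 1 * 1 :=
        mul_le_mul h1 (hgb a ha) (abs_nonneg _) zero_le_one
    _ = 1 := by ring

lemma prod_integrable {ν₁ ν₂ : Measure ℝ} {s₁ s₂ : Set ℝ} [SFinite ν₁] [SFinite ν₂]
    [IsFiniteMeasure (ν₁.restrict s₁)] [IsFiniteMeasure (ν₂.restrict s₂)]
    (hs₁ : MeasurableSet s₁) (hs₂ : MeasurableSet s₂)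
    (hsub₁ : s₁ ⊆ Set.Icc (0:ℝ) 1) (hsub₂ : s₂ ⊆ Set.Icc (0:ℝ) 1)
    {f g : ℝ → ℝ} (hf : Measurable f) (hg : Measurable g)
    (hfb : ∀ s ∈ Set.Icc (0:ℝ) 1, |f s| ≤ 1) (hgb : ∀ t ∈ Set.Icc (0:ℝ) 1, |g t| ≤ 1) :
    Integrable (Function.uncurry fun a b => (Set.Iic a).indicator f b * g a)
      ((ν₁.restrict s₁).prod (ν₂.restrict s₂)) := by
  have hMmeas : MeasurableSet {z : ℝ × ℝ | z.2 ≤ z.1} :=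
    measurableSet_le measurable_snd measurable_fst
  have hφmeas : Measurable (Function.uncurry fun a b => (Set.Iic a).indicator f b * g a) := by
    have heq : (Function.uncurry fun a b => (Set.Iic a).indicator f b * g a)
        = fun z : ℝ × ℝ => ({w : ℝ × ℝ | w.2 ≤ w.1}.indicator (fun w => f w.2) z) * g z.1 := by
      funext z
      simp only [Function.uncurry, Set.indicator_apply, Set.mem_Iic, Set.mem_setOf_eq]
    rw [heq]
    exact (((hf.comp measurable_snd).indicator hMmeas)).mul (hg.comp measurable_fst)
  refine Integrable.mono' (integrable_const 1) hφmeas.aestronglyMeasurable ?_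
  rw [Measure.prod_restrict]
  refine (ae_restrict_mem (hs₁.prod hs₂)).mono (fun z hz => ?_)
  exact indicator_bound hfb hgb (hsub₁ hz.1) (hsub₂ hz.2)

lemma fub1 {f g : ℝ → ℝ} (hf : Measurable f) (hg : Measurable g)
    (hfb : ∀ s ∈ Set.Icc (0:ℝ) 1, |f s| ≤ 1) (hgb : ∀ t ∈ Set.Icc (0:ℝ) 1, |g t| ≤ 1) :
    ∫ t in Set.Icc (0:ℝ) 1, (∫ s in (0:ℝ)..t, f s) * g t ∂μ
      = ∫ s in (0:ℝ)..1, f s * (∫ t in Set.Icc s 1, g t ∂μ) := by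
  haveI : IsFiniteMeasure (volume.restrict (Set.Ioc (0:ℝ) 1)) :=
    ⟨by rw [Measure.restrict_apply_univ, Real.volume_Ioc]; exact ENNReal.ofReal_lt_top⟩
  have step1 : ∫ t in Set.Icc (0:ℝ) 1, (∫ s in (0:ℝ)..t, f s) * g t ∂μ
      = ∫ t in Set.Icc (0:ℝ) 1, (∫ s in Set.Ioc (0:ℝ) 1, (Set.Iic t).indicator f s) * g t ∂μ := by
    refine setIntegral_congr_fun measurableSet_Icc (fun t ht => ?_)
    congr 1
    have hset0 : Set.Ioc (0:ℝ) 1 ∩ Set.Iic t = Set.Ioc 0 t := by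
      rw [Set.Ioc_inter_Iic, min_eq_right ht.2]
    rw [intervalIntegral.integral_of_le ht.1,
      setIntegral_indicator measurableSet_Iic, hset0]
  have step2 : ∀ t : ℝ, (∫ s in Set.Ioc (0:ℝ) 1, (Set.Iic t).indicator f s) * g t
      = ∫ s in Set.Ioc (0:ℝ) 1, (Set.Iic t).indicator f s * g t := by
    intro t
    rw [← integral_mul_const]
  have hswap := integral_integral_swap (μ := μ.restrict (Set.Icc (0:ℝ) 1))
    (ν := volume.restrict (Set.Ioc (0:ℝ) 1))
    (f := fun t s => (Set.Iic t).indicator f s * g t)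
    (prod_integrable measurableSet_Icc measurableSet_Ioc (le_refl _) Set.Ioc_subset_Icc_self
      hf hg hfb hgb)
  rw [step1]
  simp only [step2]
  rw [hswap]
  rw [intervalIntegral.integral_of_le (zero_le_one)]
  refine setIntegral_congr_fun measurableSet_Ioc (fun s hs => ?_)
  have hpt : ∀ t : ℝ, (Set.Iic t).indicator f s * g t
      = (Set.Ici s).indicator (fun t' => f s * g t') t := by
    intro t
    by_cases hst : s ≤ t
    · rw [Set.indicator_of_mem (Set.mem_Iic.mpr hst), Set.indicator_of_mem (Set.mem_Ici.mpr hst)]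
    · rw [Set.indicator_of_notMem (by simpa using hst),
        Set.indicator_of_notMem (by simpa using hst), zero_mul]
  simp only [hpt]
  rw [setIntegral_indicator measurableSet_Ici]
  have hset : Set.Icc (0:ℝ) 1 ∩ Set.Ici s = Set.Icc s 1 := by
    ext u
    simp only [Set.mem_inter_iff, Set.mem_Icc, Set.mem_Ici]
    constructor
    · rintro ⟨⟨_, h2⟩, h3⟩; exact ⟨h3, h2⟩
    · rintro ⟨h1, h2⟩; exact ⟨⟨le_trans hs.1.le h1, h2⟩, h1⟩
  rw [hset, integral_const_mul]

lemma fub2 {f g : ℝ → ℝ} (hf : Measurable f) (hg : Measurable g)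
    (hfb : ∀ s ∈ Set.Icc (0:ℝ) 1, |f s| ≤ 1) (hgb : ∀ t ∈ Set.Icc (0:ℝ) 1, |g t| ≤ 1) :
    ∫ s in (0:ℝ)..1, (∫ u in Set.Icc (0:ℝ) s, f u ∂μ) * g s
      = ∫ u in Set.Icc (0:ℝ) 1, f u * (∫ s in u..1, g s) ∂μ := by
  haveI : IsFiniteMeasure (volume.restrict (Set.Ioc (0:ℝ) 1)) :=
    ⟨by rw [Measure.restrict_apply_univ, Real.volume_Ioc]; exact ENNReal.ofReal_lt_top⟩
  rw [intervalIntegral.integral_of_le (zero_le_one)]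
  have step1 : ∫ s in Set.Ioc (0:ℝ) 1, (∫ u in Set.Icc (0:ℝ) s, f u ∂μ) * g s
      = ∫ s in Set.Ioc (0:ℝ) 1, (∫ u in Set.Icc (0:ℝ) 1, (Set.Iic s).indicator f u ∂μ) * g s := by
    refine setIntegral_congr_fun measurableSet_Ioc (fun s hs => ?_)
    congr 1
    have hset0 : Set.Icc (0:ℝ) 1 ∩ Set.Iic s = Set.Icc 0 s := by
      ext u
      simp only [Set.mem_inter_iff, Set.mem_Icc, Set.mem_Iic]
      constructor
      · rintro ⟨⟨h1, _⟩, h2⟩; exact ⟨h1, h2⟩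
      · rintro ⟨h1, h2⟩; exact ⟨⟨h1, le_trans h2 hs.2⟩, h2⟩
    rw [setIntegral_indicator measurableSet_Iic, hset0]
  have step2 : ∀ s : ℝ, (∫ u in Set.Icc (0:ℝ) 1, (Set.Iic s).indicator f u ∂μ) * g s
      = ∫ u in Set.Icc (0:ℝ) 1, (Set.Iic s).indicator f u * g s ∂μ := by
    intro s
    rw [← integral_mul_const]
  have hswap := integral_integral_swap (μ := volume.restrict (Set.Ioc (0:ℝ) 1))
    (ν := μ.restrict (Set.Icc (0:ℝ) 1))
    (f := fun s u => (Set.Iic s).indicator f u * g s)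
    (prod_integrable measurableSet_Ioc measurableSet_Icc Set.Ioc_subset_Icc_self (le_refl _)
      hf hg hfb hgb)
  rw [step1]
  simp only [step2]
  rw [hswap]
  refine setIntegral_congr_fun measurableSet_Icc (fun u hu => ?_)
  have hpt : ∀ s : ℝ, (Set.Iic s).indicator f u * g s
      = (Set.Ici u).indicator (fun s' => f u * g s') s := by
    intro s
    by_cases hus : u ≤ s
    · rw [Set.indicator_of_mem (Set.mem_Iic.mpr hus), Set.indicator_of_mem (Set.mem_Ici.mpr hus)]
    · rw [Set.indicator_of_notMem (by simpa using hus),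
        Set.indicator_of_notMem (by simpa using hus), zero_mul]
  simp only [hpt]
  rw [setIntegral_indicator measurableSet_Ici]
  have hset : (Set.Ioc (0:ℝ) 1 ∩ Set.Ici u : Set ℝ) =ᵐ[volume] (Set.Ioc u 1 : Set ℝ) := by
    rw [MeasureTheory.ae_eq_set]
    constructor
    · refine measure_mono_null (fun z hz => ?_) (Real.volume_singleton (a := u))
      simp only [Set.mem_diff, Set.mem_inter_iff, Set.mem_Ioc, Set.mem_Ici,
        Set.mem_singleton_iff, not_and_or, not_lt, not_le] at hz ⊢
      rcases hz with ⟨⟨⟨h1, h2⟩, h3⟩, h4⟩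
      rcases h4 with h4 | h4
      · linarith
      · linarith
    · refine measure_mono_null (fun z hz => ?_) (Real.volume_singleton (a := u))
      simp only [Set.mem_diff, Set.mem_inter_iff, Set.mem_Ioc, Set.mem_Ici,
        Set.mem_singleton_iff, not_and_or, not_lt, not_le] at hz ⊢
      rcases hz with ⟨⟨h1, h2⟩, h3⟩
      rcases h3 with h3 | h3
      · rcases h3 with h3 | h3
        · linarith [hu.1]
        · linarith
      · linarith
  rw [setIntegral_congr_set hset, integral_const_mul,
    ← intervalIntegral.integral_of_le hu.2]


theorem stmt_19
    (μ : Measure ℝ) [IsProbabilityMeasure μ] [NullSingletonClass μ]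
    (hsupp : μ (Set.Icc (0:ℝ) 1)ᶜ = 0)
    (r₁ r₂ m₁ m₂ : ℝ)
    (hr₁ : 0 < r₁) (hr₂ : 0 < r₂) (hm₁ : 0 < m₁) (hm₂ : 0 < m₂)
    (hrsum : r₁ + r₂ ≤ 1) (hmsum : m₁ + m₂ = 1)
    (hss : μ = ENNReal.ofReal m₁ • Measure.map (fun x => r₁ * x) μ
           + ENNReal.ofReal m₂ • Measure.map (fun x => r₂ * x + 1 - r₂) μ)
    (p q : ℕ → ℝ → ℝ)
    (hp0 : ∀ x : ℝ, p 0 x = 1) (hq0 : ∀ x : ℝ, q 0 x = 1)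
    (hpodd : ∀ (n : ℕ) (x : ℝ), p (2*n+1) x = ∫ t in Set.Icc (0:ℝ) x, p (2*n) t ∂μ)
    (hpeven : ∀ (n : ℕ) (x : ℝ), p (2*n+2) x = ∫ t in (0:ℝ)..x, p (2*n+1) t)
    (hqodd : ∀ (n : ℕ) (x : ℝ), q (2*n+1) x = ∫ t in (0:ℝ)..x, q (2*n) t)
    (hqeven : ∀ (n : ℕ) (x : ℝ), q (2*n+2) x = ∫ t in Set.Icc (0:ℝ) x, q (2*n+1) t ∂μ)
    (sinN sinD : ℝ → ℝ)
    (hsinN : ∀ z : ℝ, sinN z = ∑' n : ℕ, (-1:ℝ)^n * z^(2*n+1) * p (2*n+1) 1)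
    (hsinD : ∀ z : ℝ, sinD z = ∑' n : ℕ, (-1:ℝ)^n * z^(2*n+1) * q (2*n+1) 1)
    (h₁₂ : r₁ = m₂) (h₂₁ : r₂ = m₁) :
    (∀ n : ℕ, p (2*n+1) 1 = q (2*n+1) 1) ∧
    (∀ z : ℝ, sinN z = sinD z) ∧
    (∀ z : ℝ, 0 < z → (sinN z = 0 ↔ sinD z = 0)) := by
  -- preliminaries
  have hK := Fc_K hsupp hr₁ hr₂ hm₁ hm₂ hmsum hss h₁₂ h₂₁
  have hmap := map_Gc hsupp hK
  have hcov : ∀ (h : ℝ → ℝ), Measurable h → ∀ (s : Set ℝ), MeasurableSet s →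
      ∫ t in s, h t ∂μ = ∫ u in Set.Icc (0:ℝ) 1 ∩ Gc μ ⁻¹' s, h (Gc μ u) :=
    fun h hh s hs => cov hmap hh hs
  have hBpack := Bf_props (μ := μ) hsupp
  have hBmeasE : ∀ b : ℕ, Measurable (Bf μ (2*b)) := fun b => ((hBpack b).1).1.measurable
  have hBmeasO : ∀ b : ℕ, Measurable (Bf μ (2*b+1)) := fun b => ((hBpack b).2.1).1.measurable
  have hBboundE : ∀ b : ℕ, ∀ t ∈ Set.Icc (0:ℝ) 1, |Bf μ (2*b) t| ≤ 1 := by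
    intro b t ht
    exact abs_le.mpr ⟨by linarith [((hBpack b).1).2.1 t], ((hBpack b).1).2.2 t ht⟩
  have hBboundO : ∀ b : ℕ, ∀ t ∈ Set.Icc (0:ℝ) 1, |Bf μ (2*b+1) t| ≤ 1 := by
    intro b t ht
    exact abs_le.mpr ⟨by linarith [((hBpack b).2.1).2.1 t], ((hBpack b).2.1).2.2 t ht⟩
  -- properties of p
  have hp_oddzero : ∀ (k : ℕ) (t : ℝ), t ≤ 0 → p (2*k+1) t = 0 := by
    intro k t ht
    rw [hpodd]
    have hnull : μ (Set.Icc (0:ℝ) t) = 0 := by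
      rcases lt_or_eq_of_le ht with h | h
      · rw [Set.Icc_eq_empty (by linarith : ¬ (0:ℝ) ≤ t)]
        exact measure_empty
      · rw [h, Set.Icc_self]
        exact measure_singleton 0
    rw [Measure.restrict_eq_zero.mpr hnull]
    exact integral_zero_measure _
  have hp_pack : ∀ k : ℕ,
      (Monotone (p (2*k)) ∧ (∀ x, 0 ≤ p (2*k) x) ∧ (∀ x ∈ Set.Icc (0:ℝ) 1, p (2*k) x ≤ 1)) ∧
      (Monotone (p (2*k+1)) ∧ (∀ x, 0 ≤ p (2*k+1) x) ∧
        (∀ x ∈ Set.Icc (0:ℝ) 1, p (2*k+1) x ≤ 1)) := by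
    have stepO : ∀ k : ℕ,
        (Monotone (p (2*k)) ∧ (∀ x, 0 ≤ p (2*k) x) ∧ (∀ x ∈ Set.Icc (0:ℝ) 1, p (2*k) x ≤ 1)) →
        (Monotone (p (2*k+1)) ∧ (∀ x, 0 ≤ p (2*k+1) x) ∧
          (∀ x ∈ Set.Icc (0:ℝ) 1, p (2*k+1) x ≤ 1)) := by
      rintro k ⟨hM, hN, hL⟩
      have hInt : Integrable (p (2*k)) μ :=
        integrable_of_bound hsupp hM.measurable
          (fun t ht => abs_le.mpr ⟨by linarith [hN t], hL t ht⟩)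
      refine ⟨?_, ?_, ?_⟩
      · intro x y hxy
        rw [hpodd, hpodd]
        exact setIntegral_mono_set hInt.integrableOn
          (Filter.Eventually.of_forall fun t => hN t)
          ((Set.Icc_subset_Icc_right hxy).eventuallyLE)
      · intro x
        rw [hpodd]
        exact setIntegral_nonneg measurableSet_Icc (fun t _ => hN t)
      · intro x hx
        rw [hpodd]
        calc ∫ t in Set.Icc (0:ℝ) x, p (2*k) t ∂μ ≤ ∫ _t in Set.Icc (0:ℝ) x, (1:ℝ) ∂μ := by
              apply setIntegral_mono_on hInt.integrableOn
                (integrableOn_const (measure_ne_top μ _)) measurableSet_Icc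
              exact fun t ht => hL t ⟨ht.1, le_trans ht.2 hx.2⟩
          _ = (μ (Set.Icc (0:ℝ) x)).toReal := by rw [setIntegral_const, smul_eq_mul, mul_one]; rfl
          _ ≤ 1 := by
              have h1 := prob_le_one (μ := μ) (s := Set.Icc (0:ℝ) x)
              have h2 := ENNReal.toReal_mono (by simp) h1
              simpa using h2
    have stepE : ∀ k : ℕ,
        (Monotone (p (2*k+1)) ∧ (∀ x, 0 ≤ p (2*k+1) x) ∧
          (∀ x ∈ Set.Icc (0:ℝ) 1, p (2*k+1) x ≤ 1)) →
        (Monotone (p (2*(k+1))) ∧ (∀ x, 0 ≤ p (2*(k+1)) x) ∧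
          (∀ x ∈ Set.Icc (0:ℝ) 1, p (2*(k+1)) x ≤ 1)) := by
      rintro k ⟨hM, hN, hL⟩
      have h2k : 2*(k+1) = 2*k+2 := by ring
      have hII : ∀ a b : ℝ, IntervalIntegrable (p (2*k+1)) volume a b :=
        fun a b => hM.intervalIntegrable
      rw [h2k]
      refine ⟨?_, ?_, ?_⟩
      · intro x y hxy
        rw [hpeven, hpeven]
        have hsplit := intervalIntegral.integral_add_adjacent_intervals (hII 0 x) (hII x y)
        have hpos : 0 ≤ ∫ t in x..y, p (2*k+1) t :=
          intervalIntegral.integral_nonneg hxy (fun u _ => hN u)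
        linarith
      · intro x
        rw [hpeven]
        rcases le_or_gt 0 x with hx | hx
        · exact intervalIntegral.integral_nonneg hx (fun u _ => hN u)
        · have hEq : Set.EqOn (p (2*k+1)) 0 (Set.uIcc 0 x) := by
            intro t ht
            rw [Set.uIcc_of_ge hx.le] at ht
            exact hp_oddzero k t ht.2
          rw [intervalIntegral.integral_congr hEq]
          simp
      · intro x hx
        rw [hpeven]
        calc (∫ t in (0:ℝ)..x, p (2*k+1) t) ≤ ∫ _t in (0:ℝ)..x, (1:ℝ) := by
              apply intervalIntegral.integral_mono_on hx.1 (hII 0 x) intervalIntegrable_const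
              exact fun t ht => hL t ⟨ht.1, le_trans ht.2 hx.2⟩
          _ = x := by simp
          _ ≤ 1 := hx.2
    intro k
    induction k with
    | zero =>
      have h0 : Monotone (p (2*0)) ∧ (∀ x, 0 ≤ p (2*0) x) ∧
          (∀ x ∈ Set.Icc (0:ℝ) 1, p (2*0) x ≤ 1) := by
        refine ⟨fun a b _ => ?_, fun x => ?_, fun x _ => ?_⟩ <;> simp [hp0]
      exact ⟨h0, stepO 0 h0⟩
    | succ k ih =>
      have hE := stepE k ih.2
      exact ⟨hE, stepO (k+1) hE⟩
  have hpmeasO : ∀ k : ℕ, Measurable (p (2*k+1)) := fun k => ((hp_pack k).2).1.measurable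
  have hpmeasE : ∀ k : ℕ, Measurable (p (2*k)) := fun k => ((hp_pack k).1).1.measurable
  have hpboundO : ∀ k : ℕ, ∀ t ∈ Set.Icc (0:ℝ) 1, |p (2*k+1) t| ≤ 1 := fun k t ht =>
    abs_le.mpr ⟨by linarith [((hp_pack k).2).2.1 t], ((hp_pack k).2).2.2 t ht⟩
  have hpboundE : ∀ k : ℕ, ∀ t ∈ Set.Icc (0:ℝ) 1, |p (2*k) t| ≤ 1 := fun k t ht =>
    abs_le.mpr ⟨by linarith [((hp_pack k).1).2.1 t], ((hp_pack k).1).2.2 t ht⟩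
  -- Claim A : p (2n+1) 1 = Bf μ (2n+1) 0 via Fubini chain
  have hswap : ∀ a b : ℕ, ∫ t in Set.Icc (0:ℝ) 1, p (2*a+2) t * Bf μ (2*b) t ∂μ
      = ∫ t in Set.Icc (0:ℝ) 1, p (2*a) t * Bf μ (2*b+2) t ∂μ := by
    intro a b
    have e1 : ∫ t in Set.Icc (0:ℝ) 1, p (2*a+2) t * Bf μ (2*b) t ∂μ
        = ∫ t in Set.Icc (0:ℝ) 1, (∫ s in (0:ℝ)..t, p (2*a+1) s) * Bf μ (2*b) t ∂μ :=
      setIntegral_congr_fun measurableSet_Icc (fun t _ => by rw [hpeven a t])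
    rw [e1, fub1 (hpmeasO a) (hBmeasE b) (hpboundO a) (hBboundE b)]
    simp only [show ∀ y : ℝ, (∫ t in Set.Icc y 1, Bf μ (2*b) t ∂μ) = Bf μ (2*b+1) y from
      fun y => (Bf_odd μ b y).symm]
    have e2 : ∫ s in (0:ℝ)..1, p (2*a+1) s * Bf μ (2*b+1) s
        = ∫ s in (0:ℝ)..1, (∫ u in Set.Icc (0:ℝ) s, p (2*a) u ∂μ) * Bf μ (2*b+1) s :=
      intervalIntegral.integral_congr (fun s _ => by rw [hpodd a s])
    rw [e2, fub2 (hpmeasE a) (hBmeasO b) (hpboundE a) (hBboundO b)]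
    simp only [show ∀ y : ℝ, (∫ s in y..1, Bf μ (2*b+1) s) = Bf μ (2*b+2) y from
      fun y => (Bf_even μ b y).symm]
  have hchain : ∀ a b : ℕ, ∫ t in Set.Icc (0:ℝ) 1, p (2*a) t * Bf μ (2*b) t ∂μ
      = Bf μ (2*(a+b)+1) 0 := by
    intro a
    induction a with
    | zero =>
      intro b
      have e : ∫ t in Set.Icc (0:ℝ) 1, p (2*0) t * Bf μ (2*b) t ∂μ
          = ∫ t in Set.Icc (0:ℝ) 1, Bf μ (2*b) t ∂μ :=
        setIntegral_congr_fun measurableSet_Icc (fun t _ => by rw [hp0 t, one_mul])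
      rw [e, ← Bf_odd μ b 0]
      congr 1
      omega
    | succ a ih =>
      intro b
      have h2 : 2*(a+1) = 2*a+2 := by ring
      rw [h2, hswap a b]
      have h3 : 2*b+2 = 2*(b+1) := by ring
      rw [h3, ih (b+1)]
      congr 1
      omega
  have hA : ∀ n : ℕ, p (2*n+1) 1 = Bf μ (2*n+1) 0 := by
    intro n
    rw [hpodd n 1]
    have e : ∫ t in Set.Icc (0:ℝ) 1, p (2*n) t ∂μ
        = ∫ t in Set.Icc (0:ℝ) 1, p (2*n) t * Bf μ (2*0) t ∂μ :=
      setIntegral_congr_fun measurableSet_Icc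
        (fun t _ => by rw [show (2*0 : ℕ) = 0 from rfl, Bf_zero, mul_one])
    rw [e, hchain n 0]
    norm_num
  -- Claim B : q k x = Bf μ k (1 - Fc μ x) on [0,1]
  have hq_pair : ∀ j : ℕ,
      (∀ x ∈ Set.Icc (0:ℝ) 1, q (2*j) x = Bf μ (2*j) (1 - Fc μ x)) ∧
      (∀ x ∈ Set.Icc (0:ℝ) 1, q (2*j+1) x = Bf μ (2*j+1) (1 - Fc μ x)) := by
    have stepO : ∀ j : ℕ, (∀ x ∈ Set.Icc (0:ℝ) 1, q (2*j) x = Bf μ (2*j) (1 - Fc μ x)) →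
        (∀ x ∈ Set.Icc (0:ℝ) 1, q (2*j+1) x = Bf μ (2*j+1) (1 - Fc μ x)) := by
      intro j IH x hx
      have ha : (1 - Fc μ x) ∈ Set.Icc (0:ℝ) 1 :=
        ⟨by linarith [Fc_le_one (μ := μ) x], by linarith [Fc_nonneg (μ := μ) x]⟩
      have hR : Bf μ (2*j+1) (1 - Fc μ x) = ∫ t in (0:ℝ)..x, Bf μ (2*j) (1 - Fc μ t) := by
        rw [Bf_odd, hcov (Bf μ (2*j)) (hBmeasE j) _ measurableSet_Icc,
          set_cov1 hK ha, hK x hx, integral_Icc_eq_integral_Ioc,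
          ← intervalIntegral.integral_of_le (by linarith [hx.1] : (1:ℝ) - x ≤ 1)]
        have hcs := intervalIntegral.integral_comp_sub_left (a := (0:ℝ)) (b := x)
          (fun u => Bf μ (2*j) (Gc μ u)) 1
        rw [sub_zero] at hcs
        rw [← hcs]
        refine intervalIntegral.integral_congr (fun t _ => ?_)
        show Bf μ (2*j) (Gc μ (1 - t)) = Bf μ (2*j) (1 - Fc μ t)
        unfold Gc
        rw [sub_sub_cancel]
      rw [hqodd j x, hR]
      refine intervalIntegral.integral_congr (fun t ht => ?_)
      rw [Set.uIcc_of_le hx.1] at ht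
      exact IH t ⟨ht.1, le_trans ht.2 hx.2⟩
    have stepE : ∀ j : ℕ, (∀ x ∈ Set.Icc (0:ℝ) 1, q (2*j+1) x = Bf μ (2*j+1) (1 - Fc μ x)) →
        (∀ x ∈ Set.Icc (0:ℝ) 1, q (2*j+2) x = Bf μ (2*j+2) (1 - Fc μ x)) := by
      intro j IH x hx
      rw [hqeven j x]
      have e1 : ∫ t in Set.Icc (0:ℝ) x, q (2*j+1) t ∂μ
          = ∫ t in Set.Icc (0:ℝ) x, Bf μ (2*j+1) (1 - Fc μ t) ∂μ :=
        setIntegral_congr_fun measurableSet_Icc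
          (fun t ht => IH t ⟨ht.1, le_trans ht.2 hx.2⟩)
      have hmeas : Measurable (fun t => Bf μ (2*j+1) (1 - Fc μ t)) :=
        (hBmeasO j).comp (measurable_const.sub Fc_meas)
      rw [e1, hcov _ hmeas _ measurableSet_Icc, set_cov2 hK hx]
      have e2 : ∫ u in Set.Icc (0:ℝ) (Fc μ x), Bf μ (2*j+1) (1 - Fc μ (Gc μ u))
          = ∫ u in Set.Icc (0:ℝ) (Fc μ x), Bf μ (2*j+1) (1 - u) := by
        refine setIntegral_congr_fun measurableSet_Icc (fun u hu => ?_)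
        rw [Fc_Gc hK ⟨hu.1, le_trans hu.2 (Fc_le_one x)⟩]
      rw [e2, integral_Icc_eq_integral_Ioc,
        ← intervalIntegral.integral_of_le (Fc_nonneg (μ := μ) x)]
      have hcs := intervalIntegral.integral_comp_sub_left (a := (0:ℝ)) (b := Fc μ x)
        (Bf μ (2*j+1)) 1
      rw [sub_zero] at hcs
      rw [hcs, Bf_even]
    intro j
    induction j with
    | zero =>
      have h0 : ∀ x ∈ Set.Icc (0:ℝ) 1, q (2*0) x = Bf μ (2*0) (1 - Fc μ x) := by
        intro x _
        rw [show (2*0 : ℕ) = 0 from rfl, hq0, Bf_zero]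
      exact ⟨h0, stepO 0 h0⟩
    | succ j ih =>
      have hE : ∀ x ∈ Set.Icc (0:ℝ) 1, q (2*(j+1)) x = Bf μ (2*(j+1)) (1 - Fc μ x) := by
        have := stepE j ih.2
        intro x hx
        have h2 : 2*(j+1) = 2*j+2 := by ring
        rw [h2]
        exact this x hx
      exact ⟨hE, stepO (j+1) hE⟩
  -- assemble
  have hmain : ∀ n : ℕ, p (2*n+1) 1 = q (2*n+1) 1 := by
    intro n
    have hB1 : q (2*n+1) 1 = Bf μ (2*n+1) 0 := by
      have := (hq_pair n).2 1 ⟨zero_le_one, le_rfl⟩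
      rwa [Fc_one hsupp, sub_self] at this
    rw [hA n, hB1]
  have hsin : ∀ z : ℝ, sinN z = sinD z := by
    intro z
    rw [hsinN z, hsinD z]
    exact tsum_congr (fun n => by rw [hmain n])
  exact ⟨hmain, hsin, fun z _ => by rw [hsin z]⟩
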